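/- Let ε > 0 and set d = (log(1 + 1/ε))^{-1/2}. Then there do not exist c > 0 and δ with 0 < δ < min(d^{-2}, log(1 + 1/ε)) such that (e^s − 1)/(1 + ε − ε·e^s) = (1/c²)·((1 − d² s)^{-c²/d²} − 1) for all s ∈ (0, δ), where (1 − d²s)^{-c²/d²} denotes the real power exp(−(c²/d²)·log(1 − d²s)). -/

import Mathlib

/-- Let `ε > 0` and `d = (log(1 + 1/ε))^{-1/2}`.  Then there are no `c > 0` and
`0 < δ < min (d⁻², log(1 + 1/ε))` such that
`(e^s − 1)/(1 + ε − ε·e^s) = (1/c²)·((1 − d²s)^{-c²/d²} − 1)` for all `s ∈ (0, δ)`,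
where `(1 − d²s)^{-c²/d²} = exp(−(c²/d²)·log(1 − d²s))`.
(This is the analytic core of the fact that `T + √ε Y` is not a DT-operator.) -/
theorem not_DT_operator_identity (ε : ℝ) (hε : 0 < ε)
    (d : ℝ) (hd : d = (Real.log (1 + 1 / ε)) ^ (-(1 / 2 : ℝ))) :
    ¬ ∃ c : ℝ, 0 < c ∧ ∃ δ : ℝ, 0 < δ ∧ δ < min (1 / d ^ 2) (Real.log (1 + 1 / ε)) ∧
        ∀ s : ℝ, s ∈ Set.Ioo 0 δ →
          (Real.exp s - 1) / (1 + ε - ε * Real.exp s) =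
            (1 / c ^ 2) *
              (Real.exp (-(c ^ 2 / d ^ 2) * Real.log (1 - d ^ 2 * s)) - 1) := by
  rintro ⟨c, hc, δ, hδ0, hδm, heq⟩
  have hε1 : (0:ℝ) < 1 + 1 / ε := by positivity
  have hL : 0 < Real.log (1 + 1 / ε) := by
    apply Real.log_pos
    have : 0 < 1 / ε := by positivity
    linarith
  have hd2 : d ^ 2 = (Real.log (1 + 1 / ε))⁻¹ := by
    rw [hd, ← Real.rpow_natCast _ 2, ← Real.rpow_mul hL.le]
    norm_num [Real.rpow_neg_one]
  have hD : 0 < d ^ 2 := by rw [hd2]; exact inv_pos.mpr hL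
  obtain ⟨hδd, hδL⟩ := lt_min_iff.mp hδm
  -- positivity facts on the interval
  have hz : ∀ s ∈ Set.Ioo (0:ℝ) δ, 0 < 1 - d ^ 2 * s := by
    intro s hs
    have h1 : δ * d ^ 2 < 1 := (lt_div_iff₀ hD).mp hδd
    nlinarith [hs.2, hD]
  have hw : ∀ s ∈ Set.Ioo (0:ℝ) δ, 0 < 1 + ε - ε * Real.exp s := by
    intro s hs
    have he : Real.exp s < 1 + 1 / ε := by
      rw [← Real.exp_log hε1]
      exact Real.exp_lt_exp.mpr (lt_trans hs.2 hδL)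
    have h2 : ε * Real.exp s < ε * (1 + 1 / ε) := by
      exact mul_lt_mul_of_pos_left he hε
    have h3 : ε * (1 + 1 / ε) = ε + 1 := by field_simp
    linarith
  have hcn : c ^ 2 ≠ 0 := by positivity
  -- basic derivative building blocks
  have hwd : ∀ s : ℝ, HasDerivAt (fun s => 1 + ε - ε * Real.exp s) (-(ε * Real.exp s)) s :=
    fun s => ((Real.hasDerivAt_exp s).const_mul ε).const_sub (1 + ε)
  have hzd : ∀ s : ℝ, HasDerivAt (fun s => 1 - d ^ 2 * s) (-(d ^ 2 * 1)) s :=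
    fun s => ((hasDerivAt_id s).const_mul (d ^ 2)).const_sub 1
  -- the two sides of the hypothesis, as functions
  set g : ℝ → ℝ := fun s => (Real.exp s - 1) / (1 + ε - ε * Real.exp s) with hgdef
  set G : ℝ → ℝ := fun s =>
    (1 / c ^ 2) * (Real.exp (-(c ^ 2 / d ^ 2) * Real.log (1 - d ^ 2 * s)) - 1) with hGdef
  have hEq : Set.EqOn g G (Set.Ioo 0 δ) := fun s hs => heq s hs
  have hgd : ∀ s ∈ Set.Ioo (0:ℝ) δ, HasDerivAt g
      ((Real.exp s * (1 + ε - ε * Real.exp s) - (Real.exp s - 1) * (-(ε * Real.exp s))) /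
        (1 + ε - ε * Real.exp s) ^ 2) s := by
    intro s hs
    exact ((Real.hasDerivAt_exp s).sub_const 1).div (hwd s) (ne_of_gt (hw s hs))
  have hGd : ∀ s ∈ Set.Ioo (0:ℝ) δ, HasDerivAt G
      ((Real.exp (-(c ^ 2 / d ^ 2) * Real.log (1 - d ^ 2 * s)) *
        (-(c ^ 2 / d ^ 2) * (-(d ^ 2 * 1) / (1 - d ^ 2 * s)))) * (1 / c ^ 2)) s := by
    intro s hs
    have h1 : HasDerivAt (fun s => Real.log (1 - d ^ 2 * s))
        (-(d ^ 2 * 1) / (1 - d ^ 2 * s)) s := (hzd s).log (ne_of_gt (hz s hs))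
    have h2 := (h1.const_mul (-(c ^ 2 / d ^ 2))).exp
    have h3 := (h2.sub_const 1).const_mul (1 / c ^ 2)
    refine h3.congr_deriv ?_
    ring
  -- step 1: derive the polynomial-exponential identity P
  have hP : ∀ s ∈ Set.Ioo (0:ℝ) δ,
      Real.exp s * (1 - d ^ 2 * s) =
        (1 + ε - ε * Real.exp s) *
          (1 + ε - ε * Real.exp s + c ^ 2 * (Real.exp s - 1)) := by
    intro s hs
    have hder : deriv g s = deriv G s :=
      (Filter.eventuallyEq_of_mem (isOpen_Ioo.mem_nhds hs) hEq).deriv_eq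
    have e1 : (Real.exp s * (1 + ε - ε * Real.exp s) -
          (Real.exp s - 1) * (-(ε * Real.exp s))) / (1 + ε - ε * Real.exp s) ^ 2 =
        (Real.exp (-(c ^ 2 / d ^ 2) * Real.log (1 - d ^ 2 * s)) *
          (-(c ^ 2 / d ^ 2) * (-(d ^ 2 * 1) / (1 - d ^ 2 * s)))) * (1 / c ^ 2) := by
      rw [← (hgd s hs).deriv, ← (hGd s hs).deriv]; exact hder
    have e0 := heq s hs
    have hwne := ne_of_gt (hw s hs)
    have hzne := ne_of_gt (hz s hs)
    have hdn : d ^ 2 ≠ 0 := ne_of_gt hD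
    -- solve e0 for the exponential
    have hy : Real.exp (-(c ^ 2 / d ^ 2) * Real.log (1 - d ^ 2 * s)) =
        (1 + ε - ε * Real.exp s + c ^ 2 * (Real.exp s - 1)) / (1 + ε - ε * Real.exp s) := by
      rw [eq_div_iff hwne]
      have e0' : Real.exp s - 1 = (1 / c ^ 2 * (Real.exp (-(c ^ 2 / d ^ 2) * Real.log (1 - d ^ 2 * s)) - 1)) * (1 + ε - ε * Real.exp s) := (div_eq_iff hwne).mp e0
      have hc' : c ^ 2 * (1 / c ^ 2) = 1 := by field_simp
      linear_combination (-c ^ 2) * e0' - (Real.exp (-(c ^ 2 / d ^ 2) * Real.log (1 - d ^ 2 * s)) - 1) * (1 + ε - ε * Real.exp s) * hc'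
    rw [hy] at e1
    have hwne' : 1 + ε - Real.exp s * ε ≠ 0 := by rw [mul_comm]; exact hwne
    have hd0 : d ≠ 0 := by rintro rfl; simp at hD
    field_simp at e1
    have h := mul_left_cancel₀ (mul_ne_zero hcn hwne)
      (show (c ^ 2 * (1 + ε - ε * Real.exp s)) * (Real.exp s * (1 - d ^ 2 * s)) =
        (c ^ 2 * (1 + ε - ε * Real.exp s)) *
          ((1 + ε - ε * Real.exp s) *
            (1 + ε - ε * Real.exp s + c ^ 2 * (Real.exp s - 1))) by linear_combination (c ^ 2 * (1 + ε - ε * Real.exp s)) * e1)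
    exact h
  -- step 2: differentiate P twice
  set F₁ : ℝ → ℝ := fun s => Real.exp s * (1 - d ^ 2 * s) with hF₁def
  set F₂ : ℝ → ℝ := fun s => (1 + ε - ε * Real.exp s) *
      (1 + ε - ε * Real.exp s + c ^ 2 * (Real.exp s - 1)) with hF₂def
  set G₁ : ℝ → ℝ := fun s => Real.exp s * (1 - d ^ 2 * s) - d ^ 2 * Real.exp s with hG₁def
  set G₂ : ℝ → ℝ := fun s =>
      -(ε * Real.exp s) * (1 + ε - ε * Real.exp s + c ^ 2 * (Real.exp s - 1)) +
      (1 + ε - ε * Real.exp s) * (-(ε * Real.exp s) + c ^ 2 * Real.exp s) with hG₂def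
  have hvd : ∀ s : ℝ, HasDerivAt (fun s => 1 + ε - ε * Real.exp s + c ^ 2 * (Real.exp s - 1))
      (-(ε * Real.exp s) + c ^ 2 * Real.exp s) s := by
    intro s
    have := (hwd s).add (((Real.hasDerivAt_exp s).sub_const 1).const_mul (c ^ 2))
    exact this
  have hF₁d : ∀ s : ℝ, HasDerivAt F₁ (G₁ s) s := by
    intro s
    have := (Real.hasDerivAt_exp s).mul (hzd s)
    refine this.congr_deriv ?_
    simp only [hG₁def]; ring
  have hF₂d : ∀ s : ℝ, HasDerivAt F₂ (G₂ s) s := by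
    intro s
    exact (hwd s).mul (hvd s)
  have hQ : Set.EqOn G₁ G₂ (Set.Ioo 0 δ) := by
    intro s hs
    have hder : deriv F₁ s = deriv F₂ s :=
      (Filter.eventuallyEq_of_mem (isOpen_Ioo.mem_nhds hs) (fun t ht => hP t ht)).deriv_eq
    rw [← (hF₁d s).deriv, ← (hF₂d s).deriv]; exact hder
  -- second derivatives
  set H₁ : ℝ → ℝ := fun s => Real.exp s * (1 - d ^ 2 * s) - 2 * d ^ 2 * Real.exp s with hH₁def
  set H₂ : ℝ → ℝ := fun s =>
      -(ε * Real.exp s) * (1 + ε - ε * Real.exp s + c ^ 2 * (Real.exp s - 1)) +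
      -(ε * Real.exp s) * (-(ε * Real.exp s) + c ^ 2 * Real.exp s) +
      (-(ε * Real.exp s) * (-(ε * Real.exp s) + c ^ 2 * Real.exp s) +
       (1 + ε - ε * Real.exp s) * (-(ε * Real.exp s) + c ^ 2 * Real.exp s)) with hH₂def
  have hG₁d : ∀ s : ℝ, HasDerivAt G₁ (H₁ s) s := by
    intro s
    have := ((Real.hasDerivAt_exp s).mul (hzd s)).sub ((Real.hasDerivAt_exp s).const_mul (d ^ 2))
    refine this.congr_deriv ?_
    simp only [hH₁def]; ring
  have hG₂d : ∀ s : ℝ, HasDerivAt G₂ (H₂ s) s := by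
    intro s
    have hne : HasDerivAt (fun s => -(ε * Real.exp s)) (-(ε * Real.exp s)) s :=
      ((Real.hasDerivAt_exp s).const_mul ε).neg
    have hve : HasDerivAt (fun s => -(ε * Real.exp s) + c ^ 2 * Real.exp s)
        (-(ε * Real.exp s) + c ^ 2 * Real.exp s) s :=
      hne.add ((Real.hasDerivAt_exp s).const_mul (c ^ 2))
    have := (hne.mul (hvd s)).add ((hwd s).mul hve)
    exact this
  have hR : Set.EqOn H₁ H₂ (Set.Ioo 0 δ) := by
    intro s hs
    have hder : deriv G₁ s = deriv G₂ s :=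
      (Filter.eventuallyEq_of_mem (isOpen_Ioo.mem_nhds hs) hQ).deriv_eq
    rw [← (hG₁d s).deriv, ← (hG₂d s).deriv]; exact hder
  -- step 3: evaluate at two points and derive the contradiction
  have key : ∀ s ∈ Set.Ioo (0:ℝ) δ,
      d ^ 2 * Real.exp s = 2 * ε * (c ^ 2 - ε) * Real.exp s ^ 2 := by
    intro s hs
    have h1 := hQ hs
    have h2 := hR hs
    simp only [hG₁def, hG₂def, hH₁def, hH₂def] at h1 h2
    linear_combination h1 - h2
  have hs1 : (δ / 3 : ℝ) ∈ Set.Ioo (0:ℝ) δ := ⟨by linarith, by linarith⟩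
  have hs2 : (δ / 2 : ℝ) ∈ Set.Ioo (0:ℝ) δ := ⟨by linarith, by linarith⟩
  have k1 := key _ hs1
  have k2 := key _ hs2
  set x₁ := Real.exp (δ / 3) with hx₁
  set x₂ := Real.exp (δ / 2) with hx₂
  have hx₁p : 0 < x₁ := Real.exp_pos _
  have hx₂p : 0 < x₂ := Real.exp_pos _
  have hxlt : x₁ < x₂ := Real.exp_lt_exp.mpr (by linarith)
  have e1 : d ^ 2 = 2 * ε * (c ^ 2 - ε) * x₁ := by
    have : d ^ 2 * x₁ = (2 * ε * (c ^ 2 - ε) * x₁) * x₁ := by linear_combination k1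
    exact mul_right_cancel₀ (ne_of_gt hx₁p) this
  have e2 : d ^ 2 = 2 * ε * (c ^ 2 - ε) * x₂ := by
    have : d ^ 2 * x₂ = (2 * ε * (c ^ 2 - ε) * x₂) * x₂ := by linear_combination k2
    exact mul_right_cancel₀ (ne_of_gt hx₂p) this
  have hk0 : 2 * ε * (c ^ 2 - ε) = 0 := by
    have h3 : 2 * ε * (c ^ 2 - ε) * (x₁ - x₂) = 0 := by linear_combination e2 - e1
    rcases mul_eq_zero.mp h3 with h | h
    · exact h
    · exact absurd h (sub_ne_zero.mpr (ne_of_lt hxlt))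
  rw [hk0, zero_mul] at e1
  exact absurd e1 (ne_of_gt hD)
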